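/- Let k < 0 and f ∈ L¹(0,1), and let x(t) = t^{-k}·(x(1) - ∫_t^1 s^k f(s) ds) be a solution of x' = -(k/t)x + f on (0,1]. Then ∫_0^1 |x'(s)| ds + |x(1)| ≤ 2(|x(1)| + ∫_0^1 |f(s)| ds); in particular x' ∈ L¹(0,1) and x extends to an absolutely continuous function on [0,1]. -/

import Mathlib

open MeasureTheory Set Filter Topology


lemma pf_int {k : ℝ} (hk : k < 0) {a : ℝ} (ha : 0 < a) :
    IntegrableOn (fun u : ℝ => -k * u ^ (-k-1)) (Ioc 0 a) := by
  have h : IntervalIntegrable (fun u : ℝ => u ^ (-k-1)) volume 0 a :=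
    intervalIntegral.intervalIntegrable_rpow' (by linarith)
  rw [intervalIntegrable_iff_integrableOn_Ioc_of_le ha.le] at h
  exact h.const_mul _

lemma pf_nonneg {k : ℝ} (hk : k < 0) {u : ℝ} (hu : 0 ≤ u) : 0 ≤ -k * u ^ (-k-1) :=
  mul_nonneg (by linarith) (Real.rpow_nonneg hu _)

lemma pf_val {k : ℝ} (hk : k < 0) {a : ℝ} (ha : 0 < a) :
    ∫ u in Ioc 0 a, -k * u ^ (-k-1) = a ^ (-k) := by
  rw [← intervalIntegral.integral_of_le ha.le, intervalIntegral.integral_const_mul,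
    integral_rpow (Or.inl (by linarith))]
  have : -k - 1 + 1 = -k := by ring
  rw [this, Real.zero_rpow (by linarith : -k ≠ 0)]
  field_simp
  rw [sub_zero]
  exact mul_div_cancel_left₀ _ (ne_of_lt hk)

lemma pf_val' {k : ℝ} (hk : k < 0) {a : ℝ} (ha : 0 < a) :
    ∫⁻ u in Ioc 0 a, ENNReal.ofReal (-k * u ^ (-k-1)) = ENNReal.ofReal (a ^ (-k)) := by
  rw [← ofReal_integral_eq_lintegral_ofReal (pf_int hk ha)]
  · rw [pf_val hk ha]
  · filter_upwards [self_mem_ae_restrict measurableSet_Ioc] with u hu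
    exact pf_nonneg hk hu.1.le

lemma pf_tonelli_meas {k : ℝ} (hk : k < 0) {G : ℝ → ENNReal} (hG : Measurable G)
    {t : ℝ} (ht : t ∈ Ioc (0:ℝ) 1) :
    ∫⁻ u in Ioc (0:ℝ) t, ENNReal.ofReal (-k * u ^ (-k-1)) * ∫⁻ s in Ioc u 1, G s
      = ∫⁻ s in Ioc (0:ℝ) 1, G s * ENNReal.ofReal ((min s t) ^ (-k)) := by
  set K : ℝ → ENNReal := fun u => ENNReal.ofReal (-k * u ^ (-k-1)) with hK
  have hKm : Measurable K := by fun_prop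
  have step1 : ∫⁻ u in Ioc (0:ℝ) t, K u * ∫⁻ s in Ioc u 1, G s
      = ∫⁻ u in Ioc (0:ℝ) t, ∫⁻ s in Ioc (0:ℝ) 1, K u * (Ioi u).indicator G s := by
    refine setLIntegral_congr_fun measurableSet_Ioc (fun u hu => ?_)
    rw [lintegral_const_mul' _ _ ENNReal.ofReal_ne_top, lintegral_indicator measurableSet_Ioi,
      Measure.restrict_restrict measurableSet_Ioi]
    have hset : Ioi u ∩ Ioc (0:ℝ) 1 = Ioc u 1 := by
      ext z
      simp only [mem_inter_iff, mem_Ioi, mem_Ioc]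
      exact ⟨fun h => ⟨h.1, h.2.2⟩, fun h => ⟨h.1, lt_trans hu.1 h.1, h.2⟩⟩
    rw [hset]
  have swap : ∫⁻ u in Ioc (0:ℝ) t, ∫⁻ s in Ioc (0:ℝ) 1, K u * (Ioi u).indicator G s
      = ∫⁻ s in Ioc (0:ℝ) 1, ∫⁻ u in Ioc (0:ℝ) t, K u * (Ioi u).indicator G s := by
    apply lintegral_lintegral_swap
    have : (fun p : ℝ × ℝ => K p.1 * (Ioi p.1).indicator G p.2)
        = fun p : ℝ × ℝ => K p.1 * ({q : ℝ × ℝ | q.1 < q.2}.indicator (fun q => G q.2) p) := by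
      ext p
      simp [Set.indicator_apply]
    rw [Function.uncurry_def]
    rw [this]
    exact ((hKm.comp measurable_fst).mul ((hG.comp measurable_snd).indicator
      (measurableSet_lt measurable_fst measurable_snd))).aemeasurable
  have step3 : ∫⁻ s in Ioc (0:ℝ) 1, ∫⁻ u in Ioc (0:ℝ) t, K u * (Ioi u).indicator G s
      = ∫⁻ s in Ioc (0:ℝ) 1, G s * ENNReal.ofReal ((min s t) ^ (-k)) := by
    refine setLIntegral_congr_fun measurableSet_Ioc (fun s hs => ?_)
    have h1 : (fun u => K u * (Ioi u).indicator G s) = fun u => G s * (Iio s).indicator K u := by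
      ext u
      by_cases h : u < s <;> simp [Set.indicator_apply, h, mul_comm]
    rw [h1, lintegral_const_mul _ (hKm.indicator measurableSet_Iio),
      lintegral_indicator measurableSet_Iio, Measure.restrict_restrict measurableSet_Iio]
    congr 1
    rcases le_or_gt s t with h | h
    · have : Iio s ∩ Ioc 0 t = Ioo 0 s := by
        ext z; simp only [mem_inter_iff, mem_Iio, mem_Ioc, mem_Ioo]
        constructor
        · rintro ⟨h1, h2, h3⟩; exact ⟨h2, h1⟩
        · rintro ⟨h1, h2⟩; exact ⟨h2, h1, le_trans (le_of_lt h2) h⟩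
      rw [this, Measure.restrict_congr_set Ioo_ae_eq_Ioc, pf_val' hk hs.1, min_eq_left h]
    · have : Iio s ∩ Ioc 0 t = Ioc 0 t := by
        ext z; simp only [mem_inter_iff, mem_Iio, mem_Ioc]
        exact ⟨fun hh => hh.2, fun hh => ⟨lt_of_le_of_lt hh.2 h, hh⟩⟩
      rw [this, pf_val' hk ht.1, min_eq_right h.le]
  rw [step1, swap, step3]

lemma pf_tonelli {k : ℝ} (hk : k < 0) {G : ℝ → ENNReal}
    (hG : AEMeasurable G (volume.restrict (Ioc (0:ℝ) 1)))
    {t : ℝ} (ht : t ∈ Ioc (0:ℝ) 1) :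
    ∫⁻ u in Ioc (0:ℝ) t, ENNReal.ofReal (-k * u ^ (-k-1)) * ∫⁻ s in Ioc u 1, G s
      = ∫⁻ s in Ioc (0:ℝ) 1, G s * ENNReal.ofReal ((min s t) ^ (-k)) := by
  obtain ⟨G₀, hG₀m, hGG₀⟩ := hG
  have inner_eq : ∀ u ∈ Ioc (0:ℝ) 1, ∫⁻ s in Ioc u 1, G s = ∫⁻ s in Ioc u 1, G₀ s := by
    intro u hu
    apply lintegral_congr_ae
    have hsub : Ioc u 1 ⊆ Ioc (0:ℝ) 1 := Ioc_subset_Ioc hu.1.le le_rfl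
    exact ae_restrict_of_ae_restrict_of_subset hsub hGG₀
  have lhs_eq : ∫⁻ u in Ioc (0:ℝ) t, ENNReal.ofReal (-k * u ^ (-k-1)) * ∫⁻ s in Ioc u 1, G s
      = ∫⁻ u in Ioc (0:ℝ) t, ENNReal.ofReal (-k * u ^ (-k-1)) * ∫⁻ s in Ioc u 1, G₀ s := by
    refine setLIntegral_congr_fun measurableSet_Ioc (fun u hu => ?_)
    rw [inner_eq u ⟨hu.1, le_trans hu.2 ht.2⟩]
  have rhs_eq : ∫⁻ s in Ioc (0:ℝ) 1, G s * ENNReal.ofReal ((min s t) ^ (-k))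
      = ∫⁻ s in Ioc (0:ℝ) 1, G₀ s * ENNReal.ofReal ((min s t) ^ (-k)) := by
    apply lintegral_congr_ae
    filter_upwards [hGG₀] with s hs
    rw [hs]
  rw [lhs_eq, rhs_eq]
  exact pf_tonelli_meas hk hG₀m ht


lemma pf_phi_int {k : ℝ} (hk : k < 0) {g : ℝ → ℝ} (hg : IntegrableOn g (Ioc 0 1))
    {u : ℝ} (hu0 : 0 < u) (hu1 : u ≤ 1) :
    IntegrableOn (fun s => s ^ k * g s) (Ioc u 1) := by
  have hsub : Ioc u 1 ⊆ Ioc (0:ℝ) 1 := Ioc_subset_Ioc hu0.le le_rfl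
  have hgm : AEStronglyMeasurable g (volume.restrict (Ioc u 1)) :=
    (hg.mono_set hsub).aestronglyMeasurable
  have hr : Measurable fun s : ℝ => s ^ k := by fun_prop
  have hm : AEStronglyMeasurable (fun s => s ^ k * g s) (volume.restrict (Ioc u 1)) :=
    hr.aestronglyMeasurable.mul hgm
  refine Integrable.mono' (((hg.mono_set hsub).norm.const_mul (u ^ k))) hm ?_
  filter_upwards [self_mem_ae_restrict measurableSet_Ioc] with s hs
  have hs0 : 0 < s := lt_trans hu0 hs.1
  have hle : s ^ k ≤ u ^ k := Real.rpow_le_rpow_of_nonpos hu0 hs.1.le hk.le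
  have : ‖s ^ k * g s‖ = s ^ k * ‖g s‖ := by
    rw [norm_mul, Real.norm_of_nonneg (Real.rpow_nonneg hs0.le _)]
  rw [this]
  exact mul_le_mul_of_nonneg_right hle (norm_nonneg _)

lemma pf_F_meas {φ : ℝ → ℝ} (hφ : AEStronglyMeasurable φ (volume.restrict (Ioc (0:ℝ) 1))) :
    AEStronglyMeasurable (fun u => ∫ s in Ioc u 1, φ s) (volume.restrict (Ioc (0:ℝ) 1)) := by
  set μ := volume.restrict (Ioc (0:ℝ) 1) with hμ
  have h1 : AEStronglyMeasurable
      (fun p : ℝ × ℝ => ({q : ℝ × ℝ | q.1 < q.2}).indicator (fun q => φ q.2) p) (μ.prod μ) :=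
    (hφ.comp_snd).indicator (measurableSet_lt measurable_fst measurable_snd)
  have h2 := h1.integral_prod_right'
  apply h2.congr
  filter_upwards [self_mem_ae_restrict measurableSet_Ioc] with u hu
  have h3 : (fun s => ({q : ℝ × ℝ | q.1 < q.2}).indicator (fun q => φ q.2) (u, s))
      = (Ioi u).indicator φ := by
    ext s; by_cases h : u < s <;> simp [Set.indicator_apply, h]
  have hset : Ioi u ∩ Ioc (0:ℝ) 1 = Ioc u 1 := by
    ext z
    simp only [mem_inter_iff, mem_Ioi, mem_Ioc]
    exact ⟨fun h => ⟨h.1, h.2.2⟩, fun h => ⟨h.1, lt_trans hu.1 h.1, h.2⟩⟩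
  rw [h3, integral_indicator measurableSet_Ioi, hμ,
    Measure.restrict_restrict measurableSet_Ioi, hset]

lemma pf_partB {k : ℝ} (hk : k < 0) {g : ℝ → ℝ} (hg : IntegrableOn g (Ioc 0 1))
    (hg0 : ∀ s ∈ Ioc (0:ℝ) 1, 0 ≤ g s) {t : ℝ} (ht : t ∈ Ioc (0:ℝ) 1) :
    IntegrableOn (fun u => -k * u ^ (-k-1) * ∫ s in Ioc u 1, s ^ k * g s) (Ioc 0 t) ∧
    (∫ u in Ioc (0:ℝ) t, -k * u ^ (-k-1) * ∫ s in Ioc u 1, s ^ k * g s)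
      = ∫ s in Ioc (0:ℝ) 1, s ^ k * g s * (min s t) ^ (-k) ∧
    IntegrableOn (fun s => s ^ k * g s * (min s t) ^ (-k)) (Ioc 0 1) := by
  set μ := volume.restrict (Ioc (0:ℝ) 1) with hμ
  set Ψ : ℝ → ℝ := fun u => ∫ s in Ioc u 1, s ^ k * g s with hΨ
  set G : ℝ → ENNReal := fun s => ENNReal.ofReal (s ^ k * g s) with hG
  have hgm : AEStronglyMeasurable g μ := hg.aestronglyMeasurable
  have hr : Measurable fun s : ℝ => s ^ k := by fun_prop
  have hr2 : Measurable fun u : ℝ => -k * u ^ (-k-1) := by fun_prop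
  have hr3 : Measurable fun s : ℝ => (min s t) ^ (-k) := by fun_prop
  have hφm : AEStronglyMeasurable (fun s => s ^ k * g s) μ :=
    hr.aestronglyMeasurable.mul hgm
  have hGm : AEMeasurable G μ := ENNReal.measurable_ofReal.comp_aemeasurable hφm.aemeasurable
  have hφ_nn : ∀ s ∈ Ioc (0:ℝ) 1, 0 ≤ s ^ k * g s := fun s hs =>
    mul_nonneg (Real.rpow_nonneg hs.1.le _) (hg0 s hs)
  -- L1
  have L1 : ∀ u ∈ Ioc (0:ℝ) 1, ENNReal.ofReal (Ψ u) = ∫⁻ s in Ioc u 1, G s := by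
    intro u hu
    refine ofReal_integral_eq_lintegral_ofReal (pf_phi_int hk hg hu.1 hu.2) ?_
    filter_upwards [self_mem_ae_restrict measurableSet_Ioc] with s hs
    exact hφ_nn s ⟨lt_trans hu.1 hs.1, hs.2⟩
  have hΨ_nn : ∀ u ∈ Ioc (0:ℝ) 1, 0 ≤ Ψ u := by
    intro u hu
    refine setIntegral_nonneg measurableSet_Ioc fun s hs => hφ_nn s ⟨lt_trans hu.1 hs.1, hs.2⟩
  -- L2
  have L2 : ∫⁻ u in Ioc (0:ℝ) t, ENNReal.ofReal (-k * u ^ (-k-1) * Ψ u)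
      = ∫⁻ s in Ioc (0:ℝ) 1, G s * ENNReal.ofReal ((min s t) ^ (-k)) := by
    rw [← pf_tonelli hk hGm ht]
    refine setLIntegral_congr_fun measurableSet_Ioc (fun u hu => ?_)
    have hu1 : u ∈ Ioc (0:ℝ) 1 := ⟨hu.1, le_trans hu.2 ht.2⟩
    rw [ENNReal.ofReal_mul (pf_nonneg hk hu.1.le), L1 u hu1]
  -- L3
  have L3 : ∫⁻ s in Ioc (0:ℝ) 1, G s * ENNReal.ofReal ((min s t) ^ (-k)) < ⊤ := by
    have hb : ∀ s ∈ Ioc (0:ℝ) 1, G s * ENNReal.ofReal ((min s t) ^ (-k))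
        ≤ ENNReal.ofReal (g s) := by
      intro s hs
      have hmin : (0:ℝ) < min s t := lt_min hs.1 ht.1
      have h1 : (min s t) ^ (-k) ≤ s ^ (-k) :=
        Real.rpow_le_rpow hmin.le (min_le_left _ _) (by linarith)
      calc G s * ENNReal.ofReal ((min s t) ^ (-k))
          ≤ ENNReal.ofReal (s ^ k * g s) * ENNReal.ofReal (s ^ (-k)) := by
            exact mul_le_mul_right (ENNReal.ofReal_le_ofReal h1) _
        _ = ENNReal.ofReal (s ^ k * g s * s ^ (-k)) :=
            (ENNReal.ofReal_mul (hφ_nn s hs)).symm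
        _ = ENNReal.ofReal (g s) := by
            congr 1
            have : s ^ k * s ^ (-k) = 1 := by
              rw [← Real.rpow_add hs.1, add_neg_cancel, Real.rpow_zero]
            calc s ^ k * g s * s ^ (-k) = (s ^ k * s ^ (-k)) * g s := by ring
              _ = g s := by rw [this, one_mul]
    calc ∫⁻ s in Ioc (0:ℝ) 1, G s * ENNReal.ofReal ((min s t) ^ (-k))
        ≤ ∫⁻ s in Ioc (0:ℝ) 1, ENNReal.ofReal (g s) := by
          refine lintegral_mono_ae ?_
          filter_upwards [self_mem_ae_restrict measurableSet_Ioc] with s hs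
          exact hb s hs
      _ ≤ ∫⁻ s in Ioc (0:ℝ) 1, (‖g s‖₊ : ENNReal) := by
          refine lintegral_mono fun s => ?_
          rw [← ENNReal.ofReal_coe_nnreal, coe_nnnorm, Real.norm_eq_abs]
          exact ENNReal.ofReal_le_ofReal (le_abs_self _)
      _ < ⊤ := hg.2
  -- AESM of the two integrands
  have hΨm : AEStronglyMeasurable Ψ μ := pf_F_meas hφm
  have hLm : AEStronglyMeasurable (fun u => -k * u ^ (-k-1) * Ψ u)
      (volume.restrict (Ioc (0:ℝ) t)) := by
    have := (hr2.aestronglyMeasurable.mul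
      hΨm : AEStronglyMeasurable (fun u => -k * u ^ (-k-1) * Ψ u) μ)
    exact this.mono_measure (Measure.restrict_mono (Ioc_subset_Ioc le_rfl ht.2) le_rfl)
  have hRm : AEStronglyMeasurable (fun s => s ^ k * g s * (min s t) ^ (-k)) μ :=
    hφm.mul hr3.aestronglyMeasurable
  -- nonneg a.e. facts
  have hL_nn : 0 ≤ᵐ[volume.restrict (Ioc (0:ℝ) t)] fun u => -k * u ^ (-k-1) * Ψ u := by
    filter_upwards [self_mem_ae_restrict measurableSet_Ioc] with u hu
    exact mul_nonneg (pf_nonneg hk hu.1.le) (hΨ_nn u ⟨hu.1, le_trans hu.2 ht.2⟩)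
  have hR_nn : 0 ≤ᵐ[μ] fun s => s ^ k * g s * (min s t) ^ (-k) := by
    filter_upwards [self_mem_ae_restrict measurableSet_Ioc] with s hs
    exact mul_nonneg (hφ_nn s hs) (Real.rpow_nonneg (lt_min hs.1 ht.1).le _)
  -- conclusion (a)
  have ha : IntegrableOn (fun u => -k * u ^ (-k-1) * Ψ u) (Ioc 0 t) := by
    refine ⟨hLm, ?_⟩
    rw [hasFiniteIntegral_iff_ofReal hL_nn, L2]
    exact L3
  have hcR : IntegrableOn (fun s => s ^ k * g s * (min s t) ^ (-k)) (Ioc 0 1) := by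
    refine ⟨hRm, ?_⟩
    rw [hasFiniteIntegral_iff_ofReal hR_nn]
    have : ∫⁻ s in Ioc (0:ℝ) 1, ENNReal.ofReal (s ^ k * g s * (min s t) ^ (-k))
        = ∫⁻ s in Ioc (0:ℝ) 1, G s * ENNReal.ofReal ((min s t) ^ (-k)) := by
      refine setLIntegral_congr_fun measurableSet_Ioc (fun s hs => ?_)
      rw [ENNReal.ofReal_mul (hφ_nn s hs)]
    rw [this]; exact L3
  refine ⟨ha, ?_, hcR⟩
  rw [integral_eq_lintegral_of_nonneg_ae hL_nn hLm,
    integral_eq_lintegral_of_nonneg_ae hR_nn hRm, L2]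
  congr 1
  refine setLIntegral_congr_fun measurableSet_Ioc (fun s hs => ?_)
  rw [ENNReal.ofReal_mul (hφ_nn s hs)]


/-- For `k < 0`, every solution of the model singular equation satisfies the
AC-norm estimate `∫_0^1 |x'| + |x 1| ≤ 2 (|x 1| + ∫_0^1 |f|)`; in particular
`x'` is integrable and `x` extends to an absolutely continuous function on `[0,1]`. -/
theorem stmt_1 (k : ℝ) (hk : k < 0) (f x x' : ℝ → ℝ) (c : ℝ)
    (hf : IntegrableOn f (Ioc 0 1))
    (hc : x 1 = c)
    (hx : ∀ t ∈ Ioc (0:ℝ) 1,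
      x t = t ^ (-k) * (c - ∫ s in t..1, s ^ k * f s))
    (hx' : ∀ t ∈ Ioc (0:ℝ) 1, x' t = -(k / t) * x t + f t) :
    (∫ s in Ioc (0:ℝ) 1, |x' s|) + |c| ≤ 2 * (|c| + ∫ s in Ioc (0:ℝ) 1, |f s|) ∧
    IntegrableOn x' (Ioc 0 1) ∧
    ∃ y : ℝ → ℝ, ContinuousOn y (Icc 0 1) ∧ (∀ t ∈ Ioc (0:ℝ) 1, y t = x t) ∧
      ∀ t ∈ Icc (0:ℝ) 1, y t = y 0 + ∫ s in (0:ℝ)..t, x' s := by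
  set μ := volume.restrict (Ioc (0:ℝ) 1) with hμdef
  set F : ℝ → ℝ := fun u => ∫ s in Ioc u 1, s ^ k * f s with hF
  have h1Ioc : (1:ℝ) ∈ Ioc (0:ℝ) 1 := ⟨one_pos, le_rfl⟩
  -- x in set-integral form
  have hxF : ∀ u ∈ Ioc (0:ℝ) 1, x u = u ^ (-k) * (c - F u) := by
    intro u hu
    rw [hx u hu, hF]
    rw [intervalIntegral.integral_of_le hu.2]
  -- x' formula
  have hform : ∀ u ∈ Ioc (0:ℝ) 1,
      x' u = -k * u ^ (-k-1) * c - -k * u ^ (-k-1) * F u + f u := by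
    intro u hu
    rw [hx' u hu, hxF u hu]
    have h1 : u ^ (-k-1) = u ^ (-k) / u := by
      rw [Real.rpow_sub hu.1, Real.rpow_one]
    rw [h1]
    have hu0 : u ≠ 0 := ne_of_gt hu.1
    field_simp
    ring
  -- abs parts of f
  have hfp : IntegrableOn (fun s => max (f s) 0) (Ioc (0:ℝ) 1) := hf.pos_part
  have hfm : IntegrableOn (fun s => max (-f s) 0) (Ioc (0:ℝ) 1) := hf.neg.pos_part
  have hfa : IntegrableOn (fun s => |f s|) (Ioc (0:ℝ) 1) := hf.abs
  have hfp0 : ∀ s ∈ Ioc (0:ℝ) 1, 0 ≤ max (f s) 0 := fun s _ => le_max_right _ _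
  have hfm0 : ∀ s ∈ Ioc (0:ℝ) 1, 0 ≤ max (-f s) 0 := fun s _ => le_max_right _ _
  have hfa0 : ∀ s ∈ Ioc (0:ℝ) 1, 0 ≤ |f s| := fun s _ => abs_nonneg _
  -- Ψa and bound on |F|
  set Ψa : ℝ → ℝ := fun u => ∫ s in Ioc u 1, s ^ k * |f s| with hΨa
  have hFΨa : ∀ u ∈ Ioc (0:ℝ) 1, |F u| ≤ Ψa u := by
    intro u hu
    have h2 : Ψa u = ∫ s in Ioc u 1, ‖s ^ k * f s‖ := by
      refine setIntegral_congr_fun measurableSet_Ioc fun s hs => ?_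
      have hs0 : (0:ℝ) < s := lt_trans hu.1 hs.1
      rw [norm_mul, Real.norm_of_nonneg (Real.rpow_nonneg hs0.le _), Real.norm_eq_abs]
    calc |F u| = ‖∫ s in Ioc u 1, s ^ k * f s‖ := by rw [Real.norm_eq_abs, hF]
      _ ≤ ∫ s in Ioc u 1, ‖s ^ k * f s‖ := norm_integral_le_integral_norm _
      _ = Ψa u := h2.symm
  have hΨa_nn : ∀ u ∈ Ioc (0:ℝ) 1, 0 ≤ Ψa u := by
    intro u hu
    refine setIntegral_nonneg measurableSet_Ioc fun s hs => ?_
    exact mul_nonneg (Real.rpow_nonneg (lt_trans hu.1 hs.1).le _) (abs_nonneg _)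
  -- majorant
  set M : ℝ → ℝ := fun u => -k * u ^ (-k-1) * |c| + (-k * u ^ (-k-1) * Ψa u + |f u|) with hM
  have hP2 := pf_partB hk hfa hfa0 h1Ioc
  have hM_int : IntegrableOn M (Ioc (0:ℝ) 1) :=
    ((pf_int hk one_pos).mul_const |c|).add (hP2.1.add hfa)
  -- measurability of x'
  have hFm : AEStronglyMeasurable F μ := by
    have hr : Measurable fun s : ℝ => s ^ k := by fun_prop
    exact pf_F_meas (hr.aestronglyMeasurable.mul hf.aestronglyMeasurable)
  have hr2 : Measurable fun u : ℝ => -k * u ^ (-k-1) := by fun_prop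
  have hx'm : AEStronglyMeasurable x' μ := by
    have h3 : AEStronglyMeasurable
        (fun u => -k * u ^ (-k-1) * c - -k * u ^ (-k-1) * F u + f u) μ :=
      (((hr2.aestronglyMeasurable.mul_const c).sub
        (hr2.aestronglyMeasurable.mul hFm)).add hf.aestronglyMeasurable)
    refine h3.congr ?_
    filter_upwards [self_mem_ae_restrict measurableSet_Ioc] with u hu
    exact (hform u hu).symm
  -- bound |x'| ≤ M on Ioc 0 1
  have hbound : ∀ u ∈ Ioc (0:ℝ) 1, |x' u| ≤ M u := by
    intro u hu
    rw [hform u hu, hM]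
    have h0 : 0 ≤ -k * u ^ (-k-1) := pf_nonneg hk hu.1.le
    calc |(-k * u ^ (-k-1) * c - -k * u ^ (-k-1) * F u) + f u|
        ≤ |(-k * u ^ (-k-1) * c - -k * u ^ (-k-1) * F u)| + |f u| := abs_add_le _ _
      _ ≤ |(-k * u ^ (-k-1) * c)| + |(-k * u ^ (-k-1) * F u)| + |f u| := by
          have := abs_sub (-k * u ^ (-k-1) * c) (-k * u ^ (-k-1) * F u)
          linarith
      _ ≤ -k * u ^ (-k-1) * |c| + -k * u ^ (-k-1) * Ψa u + |f u| := by
          have e1 : |(-k * u ^ (-k-1) * c)| = -k * u ^ (-k-1) * |c| := by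
            rw [abs_mul, abs_of_nonneg h0]
          have e2 : |(-k * u ^ (-k-1) * F u)| = -k * u ^ (-k-1) * |F u| := by
            rw [abs_mul, abs_of_nonneg h0]
          have e3 : -k * u ^ (-k-1) * |F u| ≤ -k * u ^ (-k-1) * Ψa u :=
            mul_le_mul_of_nonneg_left (hFΨa u hu) h0
          linarith
      _ = -k * u ^ (-k-1) * |c| + (-k * u ^ (-k-1) * Ψa u + |f u|) := by ring
  -- integrability of x'
  have hx'int : IntegrableOn x' (Ioc (0:ℝ) 1) := by
    refine Integrable.mono' hM_int hx'm ?_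
    filter_upwards [self_mem_ae_restrict measurableSet_Ioc] with u hu
    rw [Real.norm_eq_abs]
    exact hbound u hu
  -- the norm estimate
  have hest : (∫ s in Ioc (0:ℝ) 1, |x' s|) + |c| ≤ 2 * (|c| + ∫ s in Ioc (0:ℝ) 1, |f s|) := by
    have h4 : (∫ s in Ioc (0:ℝ) 1, |x' s|) ≤ ∫ u in Ioc (0:ℝ) 1, M u :=
      setIntegral_mono_on hx'int.abs hM_int measurableSet_Ioc hbound
    have h5 : ∫ u in Ioc (0:ℝ) 1, M u
        = (∫ u in Ioc (0:ℝ) 1, -k * u ^ (-k-1) * |c|)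
          + ((∫ u in Ioc (0:ℝ) 1, -k * u ^ (-k-1) * Ψa u) + ∫ u in Ioc (0:ℝ) 1, |f u|) := by
      simp only [hM, hΨa]
      have hadd : IntegrableOn
          (fun u => -k * u ^ (-k-1) * (∫ s in Ioc u 1, s ^ k * |f s|) + |f u|)
          (Ioc (0:ℝ) 1) := hP2.1.add hfa
      rw [integral_add ((pf_int hk one_pos).mul_const |c|) hadd,
        integral_add hP2.1 hfa]
    have h6 : (∫ u in Ioc (0:ℝ) 1, -k * u ^ (-k-1) * |c|) = |c| := by
      rw [integral_mul_const, pf_val hk one_pos, Real.one_rpow, one_mul]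
    have h7 : (∫ u in Ioc (0:ℝ) 1, -k * u ^ (-k-1) * Ψa u) = ∫ s in Ioc (0:ℝ) 1, |f s| := by
      rw [hP2.2.1]
      refine setIntegral_congr_fun measurableSet_Ioc fun s hs => ?_
      rw [min_eq_left hs.2]
      have : s ^ k * s ^ (-k) = 1 := by
        rw [← Real.rpow_add hs.1, add_neg_cancel, Real.rpow_zero]
      calc s ^ k * |f s| * s ^ (-k) = (s ^ k * s ^ (-k)) * |f s| := by ring
        _ = |f s| := by rw [this, one_mul]
    rw [h5, h6, h7] at h4
    have hc0 : 0 ≤ |c| := abs_nonneg _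
    linarith
  -- the key FTC identity
  have key : ∀ t ∈ Ioc (0:ℝ) 1, (∫ u in Ioc (0:ℝ) t, x' u) = x t := by
    intro t ht
    have hsub : Ioc (0:ℝ) t ⊆ Ioc (0:ℝ) 1 := Ioc_subset_Ioc le_rfl ht.2
    set gp : ℝ → ℝ := fun s => max (f s) 0 with hgp
    set gm : ℝ → ℝ := fun s => max (-f s) 0 with hgm
    have hBp := pf_partB hk hfp hfp0 ht
    have hBm := pf_partB hk hfm hfm0 ht
    set Ψp : ℝ → ℝ := fun u => ∫ s in Ioc u 1, s ^ k * gp s with hΨp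
    set Ψm : ℝ → ℝ := fun u => ∫ s in Ioc u 1, s ^ k * gm s with hΨm
    have hFsplit : ∀ u ∈ Ioc (0:ℝ) t, F u = Ψp u - Ψm u := by
      intro u hu
      have hu1 : u ∈ Ioc (0:ℝ) 1 := hsub hu
      rw [hF, hΨp, hΨm, ← integral_sub (pf_phi_int hk hfp hu1.1 hu1.2)
        (pf_phi_int hk hfm hu1.1 hu1.2)]
      refine setIntegral_congr_fun measurableSet_Ioc fun s hs => ?_
      have : gp s - gm s = f s := by
        simp only [hgp, hgm]
        rcases le_or_gt 0 (f s) with h | h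
        · rw [max_eq_left h, max_eq_right (by linarith)]; ring
        · rw [max_eq_right h.le, max_eq_left (by linarith)]; ring
      rw [← this]; ring
    -- integrabilities on Ioc 0 t
    have hA : IntegrableOn (fun u => -k * u ^ (-k-1) * c) (Ioc (0:ℝ) t) :=
      (pf_int hk ht.1).mul_const c
    have hB : IntegrableOn (fun u => -k * u ^ (-k-1) * F u) (Ioc (0:ℝ) t) := by
      have hsubint : IntegrableOn
          (fun u => -k * u ^ (-k-1) * Ψp u - -k * u ^ (-k-1) * Ψm u) (Ioc (0:ℝ) t) :=
        hBp.1.sub hBm.1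
      refine IntegrableOn.congr_fun hsubint (fun u hu => ?_) measurableSet_Ioc
      rw [hFsplit u hu]; ring
    have hC : IntegrableOn f (Ioc (0:ℝ) t) := hf.mono_set hsub
    -- compute ∫ B
    have hBval : (∫ u in Ioc (0:ℝ) t, -k * u ^ (-k-1) * F u)
        = (∫ s in Ioc (0:ℝ) t, f s) + F t * t ^ (-k) := by
      have e1 : (∫ u in Ioc (0:ℝ) t, -k * u ^ (-k-1) * F u)
          = (∫ u in Ioc (0:ℝ) t, -k * u ^ (-k-1) * Ψp u)
            - ∫ u in Ioc (0:ℝ) t, -k * u ^ (-k-1) * Ψm u := by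
        rw [← integral_sub hBp.1 hBm.1]
        refine setIntegral_congr_fun measurableSet_Ioc fun u hu => ?_
        rw [hFsplit u hu]; ring
      have e2 : (∫ u in Ioc (0:ℝ) t, -k * u ^ (-k-1) * Ψp u)
            - (∫ u in Ioc (0:ℝ) t, -k * u ^ (-k-1) * Ψm u)
          = ∫ s in Ioc (0:ℝ) 1, s ^ k * f s * (min s t) ^ (-k) := by
        rw [hBp.2.1, hBm.2.1, ← integral_sub hBp.2.2 hBm.2.2]
        refine setIntegral_congr_fun measurableSet_Ioc fun s hs => ?_
        have : gp s - gm s = f s := by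
          simp only [hgp, hgm]
          rcases le_or_gt 0 (f s) with h | h
          · rw [max_eq_left h, max_eq_right (by linarith)]; ring
          · rw [max_eq_right h.le, max_eq_left (by linarith)]; ring
        rw [← this]; ring
      have hint : IntegrableOn (fun s => s ^ k * f s * (min s t) ^ (-k)) (Ioc (0:ℝ) 1) := by
        have hsubint : IntegrableOn
            (fun s => s ^ k * gp s * (min s t) ^ (-k) - s ^ k * gm s * (min s t) ^ (-k))
            (Ioc (0:ℝ) 1) := hBp.2.2.sub hBm.2.2
        refine IntegrableOn.congr_fun hsubint (fun s hs => ?_) measurableSet_Ioc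
        have : gp s - gm s = f s := by
          simp only [hgp, hgm]
          rcases le_or_gt 0 (f s) with h | h
          · rw [max_eq_left h, max_eq_right (by linarith)]; ring
          · rw [max_eq_right h.le, max_eq_left (by linarith)]; ring
        rw [← this]; ring
      have e3 : (∫ s in Ioc (0:ℝ) 1, s ^ k * f s * (min s t) ^ (-k))
          = (∫ s in Ioc (0:ℝ) t, s ^ k * f s * (min s t) ^ (-k))
            + ∫ s in Ioc t 1, s ^ k * f s * (min s t) ^ (-k) := by
        rw [← Ioc_union_Ioc_eq_Ioc ht.1.le ht.2]
        exact setIntegral_union (Set.Ioc_disjoint_Ioc_of_le le_rfl) measurableSet_Ioc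
          (hint.mono_set (Ioc_subset_Ioc le_rfl ht.2))
          (hint.mono_set (Ioc_subset_Ioc ht.1.le le_rfl))
      have e4 : (∫ s in Ioc (0:ℝ) t, s ^ k * f s * (min s t) ^ (-k))
          = ∫ s in Ioc (0:ℝ) t, f s := by
        refine setIntegral_congr_fun measurableSet_Ioc fun s hs => ?_
        rw [min_eq_left hs.2]
        have : s ^ k * s ^ (-k) = 1 := by
          rw [← Real.rpow_add hs.1, add_neg_cancel, Real.rpow_zero]
        calc s ^ k * f s * s ^ (-k) = (s ^ k * s ^ (-k)) * f s := by ring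
          _ = f s := by rw [this, one_mul]
      have e5 : (∫ s in Ioc t 1, s ^ k * f s * (min s t) ^ (-k)) = F t * t ^ (-k) := by
        have : (∫ s in Ioc t 1, s ^ k * f s * (min s t) ^ (-k))
            = ∫ s in Ioc t 1, s ^ k * f s * t ^ (-k) := by
          refine setIntegral_congr_fun measurableSet_Ioc fun s hs => ?_
          rw [min_eq_right hs.1.le]
        rw [this, integral_mul_const, hF]
      rw [e1, e2, e3, e4, e5]
    -- assemble
    have hcongr : (∫ u in Ioc (0:ℝ) t, x' u)
        = ∫ u in Ioc (0:ℝ) t, (-k * u ^ (-k-1) * c - -k * u ^ (-k-1) * F u + f u) := by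
      refine setIntegral_congr_fun measurableSet_Ioc fun u hu => ?_
      exact hform u (hsub hu)
    have hAB : IntegrableOn (fun u => -k * u ^ (-k-1) * c - -k * u ^ (-k-1) * F u)
        (Ioc (0:ℝ) t) := hA.sub hB
    rw [hcongr, integral_add hAB hC, integral_sub hA hB, hBval,
      integral_mul_const, pf_val hk ht.1, hxF t ht]
    ring
  -- construct y
  refine ⟨hest, hx'int, fun r => ∫ u in (0:ℝ)..r, x' u, ?_, ?_, ?_⟩
  · have hIcc : IntegrableOn x' (Icc (0:ℝ) 1) :=
      (integrableOn_Icc_iff_integrableOn_Ioc).2 hx'int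
    have := intervalIntegral.continuousOn_primitive (a := 0) (b := 1) (f := x') (μ := volume) hIcc
    refine this.congr fun r hr => ?_
    rw [intervalIntegral.integral_of_le hr.1]
  · intro t ht
    show (∫ u in (0:ℝ)..t, x' u) = x t
    rw [intervalIntegral.integral_of_le ht.1.le]
    exact key t ht
  · intro t ht
    simp
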